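/- Let V be an m-dimensional linear subspace of ℝⁿ, let α ∈ (0,∞), let X = X(V,α), and let Γ = Graph(f) for a Lipschitz function f : V → V⊥ with Lipschitz constant at most α/2. For every dyadic cube Q with Γ ∩ Q ≠ ∅, the non-tangential region T_{Q,X} = ⋃Δ*_{Q,X} (the union of the cubes in Δ*_{Q,X}) satisfies gap(T_{Q,X}, Γ) ≥ diam Q and excess(T_{Q,X}, Γ) ≤ 83·max(α,1/α)·diam Q. -/

import Mathlib

open MeasureTheory Metric Set
open scoped ENNReal NNReal

noncomputable section

abbrev E (n : ℕ) := EuclideanSpace ℝ (Fin n)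

/-- The bad cone `X(V,α) = {x : dist(x,V) > α · dist(x,V^⊥)}`. -/
def badCone {n : ℕ} (V : Submodule ℝ (E n)) (α : ℝ) : Set (E n) :=
  {x | α * Metric.infDist x (Vᗮ : Set (E n)) < Metric.infDist x (V : Set (E n))}

/-- The translated bad cone `X_x = x + X(V,α)`. -/
def badConeAt {n : ℕ} (V : Submodule ℝ (E n)) (α : ℝ) (x : E n) : Set (E n) :=
  {y | y - x ∈ badCone V α}

/-- `f` has Lipschitz constant at most `α`. -/
def LipBound {n : ℕ} (V : Submodule ℝ (E n)) (α : ℝ) (f : V → Vᗮ) : Prop :=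
  ∀ v w : V, dist (f v) (f w) ≤ α * dist v w

/-- The graph of `f : V → V^⊥`, as a subset of `ℝⁿ`. -/
def graphOf {n : ℕ} (V : Submodule ℝ (E n)) (f : V → Vᗮ) : Set (E n) :=
  {x | ∃ v : V, x = (v : E n) + (f v : E n)}

/-- A half-open dyadic cube, described by generation `k` and corner coordinates `j`. -/
structure DyadicCube (n : ℕ) where
  k : ℤ
  j : Fin n → ℤ

namespace DyadicCube

/-- Side length `2^{-k}`. -/
def side {n : ℕ} (Q : DyadicCube n) : ℝ := 2 ^ (-Q.k)

/-- The cube as a subset of `ℝⁿ`. -/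
def toSet {n : ℕ} (Q : DyadicCube n) : Set (E n) :=
  {x | ∀ i, (Q.j i : ℝ) * Q.side ≤ x i ∧ x i < ((Q.j i : ℝ) + 1) * Q.side}

/-- The geometric center of the cube. -/
def center {n : ℕ} (Q : DyadicCube n) : E n :=
  (EuclideanSpace.equiv (Fin n) ℝ).symm fun i => ((Q.j i : ℝ) + 1 / 2) * Q.side

/-- The diameter `√n · side Q`. -/
def diam {n : ℕ} (Q : DyadicCube n) : ℝ := Real.sqrt n * Q.side

end DyadicCube

/-- The radius `r_{Q,X} = 81 √n max(α,1/α) side Q`. -/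
def coneRadius {n : ℕ} (α : ℝ) (Q : DyadicCube n) : ℝ :=
  81 * Real.sqrt n * max α α⁻¹ * Q.side

/-- The conical annulus `A_{Q,X} = X_Q ∩ B̄(x_Q,r_{Q,X}) \ U(x_Q,r_{Q,X}/3)`. -/
def conAnnulus {n : ℕ} (V : Submodule ℝ (E n)) (α : ℝ) (Q : DyadicCube n) : Set (E n) :=
  ((⋃ x ∈ Q.toSet, badConeAt V α x) ∩ closedBall Q.center (coneRadius α Q)) \
    ball Q.center (coneRadius α Q / 3)

/-- The discretized conical annulus `Δ*_{Q,X}`. -/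
def discAnnulus {n : ℕ} (V : Submodule ℝ (E n)) (α : ℝ) (Q : DyadicCube n) :
    Set (DyadicCube n) :=
  {R | R.side = Q.side ∧ (R.toSet ∩ conAnnulus V α Q).Nonempty}

/-- The conical defect `Defect(μ,Q,X)`. -/
def defect {n : ℕ} (μ : Measure (E n)) (V : Submodule ℝ (E n)) (α : ℝ)
    (Q : DyadicCube n) : ℝ≥0∞ :=
  if μ Q.toSet = 0 then 0
  else ∑' R : discAnnulus V α Q, μ (R : DyadicCube n).toSet / μ Q.toSet

/-- The conical Dini function `G_{μ,X}(x)`. -/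
def dini {n : ℕ} (μ : Measure (E n)) (V : Submodule ℝ (E n)) (α : ℝ) (x : E n) : ℝ≥0∞ :=
  ∑' Q : {Q : DyadicCube n // Q.side ≤ 1 ∧ x ∈ Q.toSet}, defect μ V α Q.1

/-- `gap(S,T) = inf {|s-t| : s ∈ S, t ∈ T}` (with value `∞` if either set is empty). -/
def gap {n : ℕ} (S T : Set (E n)) : ℝ≥0∞ :=
  ⨅ (s : S) (t : T), edist (s : E n) (t : E n)

/-- `excess(S,T) = sup_{s∈S} inf_{t∈T} |s-t|` (with `excess(∅,T) = 0`). -/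
def excess {n : ℕ} (S T : Set (E n)) : ℝ≥0∞ :=
  ⨆ s : S, ⨅ t : T, edist (s : E n) (t : E n)

/-- `S` is a tree of dyadic cubes with top cube `top`. -/
def IsDyadicTree {n : ℕ} (S : Set (DyadicCube n)) (top : DyadicCube n) : Prop :=
  top ∈ S ∧ (∀ Q ∈ S, Q.toSet ⊆ top.toSet) ∧
    ∀ Q ∈ S, ∀ P : DyadicCube n, Q.toSet ⊆ P.toSet → P.toSet ⊆ top.toSet → P ∈ S

/-- The set of leaves of a family `S` of dyadic cubes with top cube `top`:
the union over infinite branches of the intersections along the branch. -/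
def leavesOf {n : ℕ} (top : DyadicCube n) (S : Set (DyadicCube n)) : Set (E n) :=
  {x | ∃ β : ℕ → DyadicCube n, (∀ i, β i ∈ S) ∧ (∀ i, (β i).k = top.k + i) ∧
    (∀ i, (β (i + 1)).toSet ⊆ (β i).toSet) ∧ ∀ i, x ∈ (β i).toSet}

/-- `Γ` is an `m`-dimensional Lipschitz graph in `ℝⁿ`. -/
def IsLipGraph (n m : ℕ) (Γ : Set (E n)) : Prop :=
  ∃ (V : Submodule ℝ (E n)) (f : V → Vᗮ) (L : ℝ),
    Module.finrank ℝ V = m ∧ 0 ≤ L ∧ LipBound V L f ∧ Γ = graphOf V f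

/-- `μ` is carried by `m`-dimensional Lipschitz graphs. -/
def CarriedByGraphs (n m : ℕ) (μ : Measure (E n)) : Prop :=
  ∃ Γ : ℕ → Set (E n), (∀ i, IsLipGraph n m (Γ i)) ∧ μ (univ \ ⋃ i, Γ i) = 0

/-- `μ` is singular to `m`-dimensional Lipschitz graphs. -/
def SingularToGraphs (n m : ℕ) (μ : Measure (E n)) : Prop :=
  ∀ Γ : Set (E n), IsLipGraph n m Γ → μ Γ = 0



section AuxProof

lemma aux_side_pos {n : ℕ} (Q : DyadicCube n) : 0 < Q.side := zpow_pos (by norm_num) _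

lemma aux_dist_le_of_coord {n : ℕ} (x y : E n) (c : ℝ) (hc : 0 ≤ c)
    (h : ∀ i, |x i - y i| ≤ c) : dist x y ≤ Real.sqrt n * c := by
  rw [EuclideanSpace.dist_eq]
  have hsum : ∑ i, dist (x i) (y i) ^ 2 ≤ (n : ℝ) * c ^ 2 := by
    calc ∑ i, dist (x i) (y i) ^ 2 ≤ ∑ _i : Fin n, c ^ 2 := by
          apply Finset.sum_le_sum
          intro i _
          have := h i
          rw [Real.dist_eq]
          nlinarith [abs_nonneg (x i - y i)]
      _ = (n : ℝ) * c ^ 2 := by simp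
  calc Real.sqrt (∑ i, dist (x i) (y i) ^ 2) ≤ Real.sqrt ((n:ℝ) * c ^ 2) :=
        Real.sqrt_le_sqrt hsum
    _ = Real.sqrt n * c := by
        rw [Real.sqrt_mul (by positivity), Real.sqrt_sq hc]

lemma aux_cube_dist_le {n : ℕ} (Q : DyadicCube n) {x y : E n}
    (hx : x ∈ Q.toSet) (hy : y ∈ Q.toSet) : dist x y ≤ Q.diam := by
  apply aux_dist_le_of_coord x y Q.side (aux_side_pos Q).le
  intro i
  obtain ⟨h1, h2⟩ := hx i; obtain ⟨h3, h4⟩ := hy i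
  rw [abs_le]; constructor <;> nlinarith

lemma aux_cube_dist_center_le {n : ℕ} (Q : DyadicCube n) {x : E n}
    (hx : x ∈ Q.toSet) : dist x Q.center ≤ Q.diam / 2 := by
  have h : Q.diam / 2 = Real.sqrt n * (Q.side / 2) := by rw [DyadicCube.diam]; ring
  rw [h]
  apply aux_dist_le_of_coord x Q.center (Q.side/2) (by linarith [aux_side_pos Q])
  intro i
  obtain ⟨h1, h2⟩ := hx i
  have hc : Q.center i = ((Q.j i : ℝ) + 1/2) * Q.side := rfl
  rw [hc, abs_le]; constructor <;> nlinarith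

lemma aux_infDist_proj {n : ℕ} (K : Submodule ℝ (E n)) (x : E n) :
    Metric.infDist x (K : Set (E n)) = ‖x - K.orthogonalProjectionOnto x‖ := by
  rw [Metric.infDist_eq_iInf, ← Submodule.starProjection_apply, Submodule.starProjection_minimal]
  congr 1

lemma aux_infDist_add_mem {n : ℕ} (K : Submodule ℝ (E n)) (y s : E n) (hs : s ∈ K) :
    Metric.infDist (y + s) (K : Set (E n)) = Metric.infDist y (K : Set (E n)) := by
  rw [aux_infDist_proj, aux_infDist_proj]
  have hps : (K.orthogonalProjectionOnto (y + s) : E n)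
      = (K.orthogonalProjectionOnto y : E n) + s := by
    rw [map_add]
    have : K.orthogonalProjectionOnto s = ⟨s, hs⟩ :=
      Submodule.orthogonalProjectionOnto_mem_subspace_eq_self (⟨s, hs⟩ : K)
    rw [this]; rfl
  rw [hps]
  congr 1
  abel

lemma aux_infDist_sub_mem {n : ℕ} (K : Submodule ℝ (E n)) (y s : E n) (hs : s ∈ K) :
    Metric.infDist (y - s) (K : Set (E n)) = Metric.infDist y (K : Set (E n)) := by
  have := aux_infDist_add_mem K (y - s) s hs
  rw [sub_add_cancel] at this
  exact this.symm

lemma aux_infDist_le_norm {n : ℕ} (K : Submodule ℝ (E n)) (y : E n) :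
    Metric.infDist y (K : Set (E n)) ≤ ‖y‖ := by
  have := Metric.infDist_le_dist_of_mem (x := y) (s := (K : Set (E n)))
    (y := 0) (by simp)
  rwa [dist_zero_right] at this

lemma aux_infDist_orthogonal_of_mem {n : ℕ} (K : Submodule ℝ (E n)) {y : E n}
    (hy : y ∈ K) : Metric.infDist y ((Kᗮ : Submodule ℝ (E n)) : Set (E n)) = ‖y‖ := by
  rw [aux_infDist_proj]
  have h0 : Kᗮ.orthogonalProjectionOnto y = 0 :=
    Submodule.orthogonalProjectionOnto_apply_of_mem_orthogonal
      (K.le_orthogonal_orthogonal hy)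
  rw [h0]
  simp

set_option maxHeartbeats 1000000 in
/-- Core estimate: points of the bad cone emanating from `Q`, at distance at least
`r/3` from the center of `Q`, are at distance at least `2 diam Q` from the graph. -/
lemma aux_core_far {n : ℕ} (V : Submodule ℝ (E n)) {α : ℝ} (hα : 0 < α)
    (f : V → Vᗮ) (hf : LipBound V (α / 2) f)
    (Q : DyadicCube n) {γ₀ : E n} (hγ₀Q : γ₀ ∈ Q.toSet)
    (v₀ : V) (hγ₀ : γ₀ = (v₀ : E n) + (f v₀ : E n))
    {a x : E n} (hx : x ∈ Q.toSet) (hax : a - x ∈ badCone V α)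
    (hfar : coneRadius α Q / 3 ≤ dist a Q.center)
    (v : V) :
    2 * Q.diam ≤ dist a ((v : E n) + (f v : E n)) := by
  set M : ℝ := max α α⁻¹ with hMdef
  have hMα : α ≤ M := le_max_left _ _
  have hM1 : 1 ≤ M := by
    rcases le_total 1 α with h | h
    · exact h.trans (le_max_left _ _)
    · have : 1 ≤ α⁻¹ := one_le_inv_iff₀.mpr ⟨hα, h⟩
      exact this.trans (le_max_right _ _)
  have hαM : 1 ≤ α * M := by
    calc (1:ℝ) = α * α⁻¹ := (mul_inv_cancel₀ hα.ne').symm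
      _ ≤ α * M := by gcongr; exact le_max_right _ _
  set d : ℝ := Q.diam with hddef
  have hd0 : 0 ≤ d := mul_nonneg (Real.sqrt_nonneg _) (aux_side_pos Q).le
  set γ : E n := (v : E n) + (f v : E n) with hγdef
  set z : E n := a - x with hzdef
  set p : E n := (V.orthogonalProjectionOnto z : E n) with hpdef
  set q : E n := z - p with hqdef
  set w : E n := a - γ with hwdef
  set u : E n := x - γ₀ with hudef
  set t : E n := (v₀ : E n) - (v : E n) with htdef
  set g : E n := (f v₀ : E n) - (f v : E n) with hgdef
  -- cone condition: α ‖p‖ < ‖q‖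
  have hdistV : Metric.infDist z (V : Set (E n)) = ‖q‖ := aux_infDist_proj V z
  have hdistVp : Metric.infDist z ((Vᗮ : Submodule ℝ (E n)) : Set (E n)) = ‖p‖ := by
    rw [aux_infDist_proj]
    rw [← Submodule.starProjection_apply, Submodule.starProjection_orthogonal_val,
      Submodule.starProjection_apply]
    congr 1
    rw [← hpdef]
    abel
  have hcone : α * ‖p‖ < ‖q‖ := by
    have := hax
    rw [badCone, Set.mem_setOf_eq] at this
    rwa [hdistV, hdistVp] at this
  have hp0 : 0 ≤ ‖p‖ := norm_nonneg _
  have hq0 : 0 ≤ ‖q‖ := norm_nonneg _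
  have hw0 : 0 ≤ ‖w‖ := norm_nonneg _
  -- ‖u‖ ≤ d
  have hu : ‖u‖ ≤ d := by
    have := aux_cube_dist_le Q hx hγ₀Q
    rwa [dist_eq_norm] at this
  -- ‖z‖ is large
  have hr : coneRadius α Q = 81 * M * d := by
    rw [coneRadius, hddef, DyadicCube.diam, hMdef]; ring
  have hz_lb : 27 * M * d - d / 2 ≤ ‖p‖ + ‖q‖ := by
    have h1 : dist x Q.center ≤ d / 2 := aux_cube_dist_center_le Q hx
    have h2 : dist a Q.center ≤ dist a x + dist x Q.center := dist_triangle _ _ _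
    have h3 : dist a x = ‖z‖ := dist_eq_norm _ _
    have h4 : ‖z‖ ≤ ‖p‖ + ‖q‖ := by
      calc ‖z‖ = ‖p + q‖ := by rw [hqdef]; congr 1; abel
        _ ≤ ‖p‖ + ‖q‖ := norm_add_le _ _
    rw [hr] at hfar
    nlinarith
  -- Lipschitz bound
  have hg_le : ‖g‖ ≤ α / 2 * ‖t‖ := by
    have := hf v₀ v
    have e1 : dist (f v₀) (f v) = ‖g‖ := by
      rw [Subtype.dist_eq, dist_eq_norm, hgdef]
    have e2 : dist v₀ v = ‖t‖ := by
      rw [Subtype.dist_eq, dist_eq_norm, htdef]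
    rw [e1, e2] at this
    exact this
  -- decomposition identities
  have hw1 : w - t = z + u + g := by
    rw [hwdef, htdef, hzdef, hudef, hgdef, hγdef, hγ₀]
    abel
  have hw2 : w - q - g = t + p + u := by
    rw [hwdef, hqdef, htdef, hzdef, hudef, hgdef, hγdef, hγ₀]
    abel
  -- lower bound on infDist w V
  have hiV : ‖q‖ - ‖u‖ - ‖g‖ ≤ Metric.infDist w (V : Set (E n)) := by
    have e0 : Metric.infDist w (V : Set (E n))
        = Metric.infDist (z + u + g) (V : Set (E n)) := by
      rw [← hw1]
      exact (aux_infDist_sub_mem V w t (by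
        rw [htdef]; exact Submodule.sub_mem V v₀.2 v.2)).symm
    rw [e0]
    have h5 : Metric.infDist z (V : Set (E n))
        ≤ Metric.infDist (z + u + g) (V : Set (E n)) + dist z (z + u + g) :=
      Metric.infDist_le_infDist_add_dist
    have h6 : dist z (z + u + g) ≤ ‖u‖ + ‖g‖ := by
      rw [dist_eq_norm]
      calc ‖z - (z + u + g)‖ = ‖-(u + g)‖ := by congr 1; abel
        _ = ‖u + g‖ := norm_neg _
        _ ≤ ‖u‖ + ‖g‖ := norm_add_le _ _
    rw [hdistV] at h5
    linarith
  -- lower bound on infDist w Vᗮ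
  have hiVp : ‖t‖ - ‖p‖ - ‖u‖
      ≤ Metric.infDist w ((Vᗮ : Submodule ℝ (E n)) : Set (E n)) := by
    have e0 : Metric.infDist w ((Vᗮ : Submodule ℝ (E n)) : Set (E n))
        = Metric.infDist (t + p + u) ((Vᗮ : Submodule ℝ (E n)) : Set (E n)) := by
      rw [← hw2]
      have hq' : q ∈ Vᗮ := by
        rw [hqdef, hpdef]; exact Submodule.sub_starProjection_mem_orthogonal (K := V) z
      have hg' : g ∈ Vᗮ := by
        rw [hgdef]; exact Submodule.sub_mem Vᗮ (f v₀).2 (f v).2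
      rw [aux_infDist_sub_mem Vᗮ (w - q) g hg', aux_infDist_sub_mem Vᗮ w q hq']
    rw [e0]
    have h5 : Metric.infDist t ((Vᗮ : Submodule ℝ (E n)) : Set (E n))
        ≤ Metric.infDist (t + p + u) ((Vᗮ : Submodule ℝ (E n)) : Set (E n))
          + dist t (t + p + u) :=
      Metric.infDist_le_infDist_add_dist
    have h6 : dist t (t + p + u) ≤ ‖p‖ + ‖u‖ := by
      rw [dist_eq_norm]
      calc ‖t - (t + p + u)‖ = ‖-(p + u)‖ := by congr 1; abel
        _ = ‖p + u‖ := norm_neg _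
        _ ≤ ‖p‖ + ‖u‖ := norm_add_le _ _
    have h7 : Metric.infDist t ((Vᗮ : Submodule ℝ (E n)) : Set (E n)) = ‖t‖ :=
      aux_infDist_orthogonal_of_mem V (by
        rw [htdef]; exact Submodule.sub_mem V v₀.2 v.2)
    rw [h7] at h5
    linarith
  -- upper bounds by ‖w‖
  have hWV : Metric.infDist w (V : Set (E n)) ≤ ‖w‖ := aux_infDist_le_norm V w
  have hWVp : Metric.infDist w ((Vᗮ : Submodule ℝ (E n)) : Set (E n)) ≤ ‖w‖ :=
    aux_infDist_le_norm Vᗮ w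
  -- arithmetic
  have hN : ‖t‖ ≤ ‖w‖ + ‖p‖ + ‖u‖ := by linarith
  have hA : ‖q‖ ≤ ‖w‖ + d + α / 2 * (‖w‖ + ‖p‖ + d) := by
    have hN' : ‖t‖ ≤ ‖w‖ + ‖p‖ + d := hN.trans (by linarith)
    have h8 : α / 2 * ‖t‖ ≤ α / 2 * (‖w‖ + ‖p‖ + d) :=
      mul_le_mul_of_nonneg_left hN' (by positivity)
    linarith [hg_le]
  have key2 : ‖q‖ ≤ (2 + α) * (‖w‖ + d) := by linarith [hA, hcone]
  have key3 : 26 * (α * M) * d ≤ (1 + α) * ‖q‖ := by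
    have c1 : α * (27 * M * d - d / 2) ≤ α * (‖p‖ + ‖q‖) :=
      mul_le_mul_of_nonneg_left hz_lb hα.le
    have c2 : 0 ≤ α * d * (M - 1) :=
      mul_nonneg (mul_nonneg hα.le hd0) (by linarith)
    have c3 : 0 ≤ α * d := mul_nonneg hα.le hd0
    linarith [hcone, c1, c2, c3]
  have key4 : 3 * (2 + α) * (1 + α) * d ≤ 26 * (α * M) * d := by
    have e1 : α * α ≤ α * M := mul_le_mul_of_nonneg_left hMα hα.le
    have e2 : 0 ≤ d * (2 * α ^ 2 - 9 * α + 15) :=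
      mul_nonneg hd0 (by nlinarith [sq_nonneg (2 * α - 9 / 2)])
    linarith [mul_le_mul_of_nonneg_right e1 hd0, mul_le_mul_of_nonneg_right hαM hd0, e2]
  have key5 : 3 * (2 + α) * d ≤ ‖q‖ := by
    have h9 : (1 + α) * (3 * (2 + α) * d) ≤ (1 + α) * ‖q‖ := by
      calc (1 + α) * (3 * (2 + α) * d) = 3 * (2 + α) * (1 + α) * d := by ring
        _ ≤ 26 * (α * M) * d := key4
        _ ≤ (1 + α) * ‖q‖ := key3
    exact le_of_mul_le_mul_left h9 (by linarith)
  have key6 : 2 * d ≤ ‖w‖ := by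
    have h10 : (2 + α) * (3 * d) ≤ (2 + α) * (‖w‖ + d) := by
      calc (2 + α) * (3 * d) = 3 * (2 + α) * d := by ring
        _ ≤ ‖q‖ := key5
        _ ≤ (2 + α) * (‖w‖ + d) := key2
    have h11 : 3 * d ≤ ‖w‖ + d := le_of_mul_le_mul_left h10 (by linarith)
    linarith
  rw [dist_eq_norm]
  exact key6

end AuxProof

theorem statement9 {n m : ℕ} (hm : 1 ≤ m) (hmn : m ≤ n - 1)
    (V : Submodule ℝ (E n)) (hV : Module.finrank ℝ V = m) (α : ℝ) (hα : 0 < α)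
    (f : V → Vᗮ) (hf : LipBound V (α / 2) f)
    (Q : DyadicCube n) (hQ : (graphOf V f ∩ Q.toSet).Nonempty) :
    ENNReal.ofReal Q.diam ≤ gap (⋃ R ∈ discAnnulus V α Q, R.toSet) (graphOf V f) ∧
      excess (⋃ R ∈ discAnnulus V α Q, R.toSet) (graphOf V f)
        ≤ ENNReal.ofReal (83 * max α α⁻¹ * Q.diam) := by
  obtain ⟨γ₀, hγ₀Γ, hγ₀Q⟩ := hQ
  obtain ⟨v₀, hγ₀⟩ := hγ₀Γ
  set M : ℝ := max α α⁻¹ with hMdef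
  have hM1 : 1 ≤ M := by
    rcases le_total 1 α with h | h
    · exact h.trans (le_max_left _ _)
    · have : 1 ≤ α⁻¹ := one_le_inv_iff₀.mpr ⟨hα, h⟩
      exact this.trans (le_max_right _ _)
  have hd0 : 0 ≤ Q.diam := mul_nonneg (Real.sqrt_nonneg _) (aux_side_pos Q).le
  have main : ∀ y, y ∈ (⋃ R ∈ discAnnulus V α Q, R.toSet) →
      (∀ γ ∈ graphOf V f, Q.diam ≤ dist y γ) ∧ dist y γ₀ ≤ 83 * M * Q.diam := by
    intro y hy
    simp only [Set.mem_iUnion, exists_prop] at hy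
    obtain ⟨R, ⟨hside, ⟨a, haR, haA⟩⟩, hyR⟩ := hy
    have hRdiam : R.diam = Q.diam := by
      rw [DyadicCube.diam, DyadicCube.diam, hside]
    have hya : dist y a ≤ Q.diam := by
      rw [← hRdiam]; exact aux_cube_dist_le R hyR haR
    obtain ⟨⟨haX, haB⟩, haO⟩ := haA
    have hnear : dist a Q.center ≤ coneRadius α Q := mem_closedBall.mp haB
    have hfar' : coneRadius α Q / 3 ≤ dist a Q.center := by
      simpa [mem_ball, not_lt] using haO
    simp only [Set.mem_iUnion, exists_prop] at haX
    obtain ⟨x, hxQ, hax⟩ := haX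
    have hax' : a - x ∈ badCone V α := hax
    constructor
    · intro γ hγ
      obtain ⟨v, hv⟩ := hγ
      have h2 : 2 * Q.diam ≤ dist a γ := by
        rw [hv]
        exact aux_core_far V hα f hf Q hγ₀Q v₀ hγ₀ hxQ hax' hfar' v
      have h3 : dist a γ ≤ dist a y + dist y γ := dist_triangle _ _ _
      have h4 : dist a y = dist y a := dist_comm _ _
      linarith
    · have hr : coneRadius α Q = 81 * M * Q.diam := by
        rw [coneRadius, DyadicCube.diam, hMdef]; ring
      have h1 : dist a Q.center ≤ 81 * M * Q.diam := hr ▸ hnear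
      have h2 : dist Q.center γ₀ ≤ Q.diam / 2 := by
        rw [dist_comm]; exact aux_cube_dist_center_le Q hγ₀Q
      have h3 : dist y γ₀ ≤ dist y a + dist a Q.center + dist Q.center γ₀ :=
        dist_triangle4 _ _ _ _
      nlinarith [mul_nonneg hd0 (sub_nonneg.mpr hM1)]
  constructor
  · refine le_iInf fun s => le_iInf fun t => ?_
    rw [edist_dist]
    exact ENNReal.ofReal_le_ofReal ((main s s.2).1 t t.2)
  · refine iSup_le fun s => ?_
    refine (iInf_le _ (⟨γ₀, ⟨v₀, hγ₀⟩⟩ : (graphOf V f : Set (E n)))).trans ?_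
    rw [edist_dist]
    exact ENNReal.ofReal_le_ofReal ((main s s.2).2)

end
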